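/- The MinHash similarity estimator is correct for a uniformly random permutation: if π is a uniformly random permutation of a finite set U, and X, Y ⊆ U are nonempty, then the probability that min_{x∈X} π(x) = min_{y∈Y} π(y) equals the Jaccard similarity |X ∩ Y| / |X ∪ Y|. -/

import Mathlib

/-- For a uniformly random bijection `π : U ≃ {1,…,|U|}` and nonempty
`X, Y ⊆ U`, the probability that `min_{x∈X} π(x) = min_{y∈Y} π(y)` equals the Jaccard
similarity `|X ∩ Y| / |X ∪ Y|`. -/
theorem stmt7 {U : Type*} [Fintype U] [DecidableEq U]
    (X Y : Finset U) (hX : X.Nonempty) (hY : Y.Nonempty) :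
    ((Finset.univ.filter (fun σ : U ≃ Fin (Fintype.card U) =>
        X.inf' hX (fun u => σ u) = Y.inf' hY (fun u => σ u))).card : ℝ) /
        ((Finset.univ : Finset (U ≃ Fin (Fintype.card U))).card : ℝ)
      = ((X ∩ Y).card : ℝ) / ((X ∪ Y).card : ℝ) := by
  classical
  have hZ : (X ∪ Y).Nonempty := hX.inl
  set n := Fintype.card U with hn
  set amin : (U ≃ Fin n) → U :=
    fun σ => σ.symm ((X ∪ Y).inf' hZ fun u => σ u) with hamin
  have hval : ∀ σ : U ≃ Fin n, σ (amin σ) = (X ∪ Y).inf' hZ fun u => σ u := by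
    intro σ; simp [hamin]
  have hmem : ∀ σ : U ≃ Fin n, amin σ ∈ X ∪ Y := by
    intro σ
    obtain ⟨u, hu, he⟩ := (X ∪ Y).exists_mem_eq_inf' hZ (fun u => σ u)
    have : amin σ = u := by simp [hamin, he]
    rw [this]; exact hu
  -- characterization
  have hiff : ∀ σ : U ≃ Fin n,
      (X.inf' hX (fun u => σ u) = Y.inf' hY (fun u => σ u)) ↔ amin σ ∈ X ∩ Y := by
    intro σ
    have hunion : (X ∪ Y).inf' hZ (fun u => σ u)
        = X.inf' hX (fun u => σ u) ⊓ Y.inf' hY (fun u => σ u) :=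
      Finset.inf'_union hX hY _
    constructor
    · intro h
      have h1 : (X ∪ Y).inf' hZ (fun u => σ u) = X.inf' hX (fun u => σ u) := by
        rw [hunion, h, inf_idem]
      obtain ⟨x, hx, hxe⟩ := X.exists_mem_eq_inf' hX (fun u => σ u)
      obtain ⟨y, hy, hye⟩ := Y.exists_mem_eq_inf' hY (fun u => σ u)
      have hax : amin σ = x := σ.injective (by rw [hval, h1, ← hxe])
      have hay : amin σ = y := σ.injective (by rw [hval, h1, h, ← hye])
      exact Finset.mem_inter.2 ⟨hax ▸ hx, hay ▸ hy⟩
    · intro h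
      obtain ⟨h1, h2⟩ := Finset.mem_inter.1 h
      have hXle : X.inf' hX (fun u => σ u) ≤ σ (amin σ) := Finset.inf'_le _ h1
      have hYle : Y.inf' hY (fun u => σ u) ≤ σ (amin σ) := Finset.inf'_le _ h2
      have hle1 : σ (amin σ) ≤ X.inf' hX (fun u => σ u) := by
        rw [hval, hunion]; exact inf_le_left
      have hle2 : σ (amin σ) ≤ Y.inf' hY (fun u => σ u) := by
        rw [hval, hunion]; exact inf_le_right
      rw [le_antisymm hXle hle1, le_antisymm hYle hle2]
  -- fibers of amin all have the same size
  have hF : ∀ u ∈ X ∪ Y, ∀ v ∈ X ∪ Y,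
      (Finset.univ.filter (fun σ : U ≃ Fin n => amin σ = u)).card
        = (Finset.univ.filter (fun σ : U ≃ Fin n => amin σ = v)).card := by
    intro u hu v hv
    have hswapZ : ∀ w ∈ X ∪ Y, Equiv.swap u v w ∈ X ∪ Y := by
      intro w hw
      rcases eq_or_ne w u with rfl | h1
      · simpa [Equiv.swap_apply_left] using hv
      rcases eq_or_ne w v with rfl | h2
      · simpa [Equiv.swap_apply_right] using hu
      · rwa [Equiv.swap_apply_of_ne_of_ne h1 h2]
    have hinf : ∀ σ : U ≃ Fin n,
        ((X ∪ Y).inf' hZ fun w => σ (Equiv.swap u v w))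
          = (X ∪ Y).inf' hZ fun w => σ w := by
      intro σ
      apply le_antisymm
      · obtain ⟨w, hw, he⟩ := (X ∪ Y).exists_mem_eq_inf' hZ (fun w => σ w)
        rw [he]
        have := Finset.inf'_le (fun w => σ (Equiv.swap u v w)) (hswapZ w hw)
        simp only [Equiv.swap_apply_self] at this; exact this
      · obtain ⟨w, hw, he⟩ :=
          (X ∪ Y).exists_mem_eq_inf' hZ (fun w => σ (Equiv.swap u v w))
        rw [he]
        exact Finset.inf'_le _ (hswapZ w hw)
    have haswap : ∀ σ : U ≃ Fin n,
        amin ((Equiv.swap u v).trans σ) = Equiv.swap u v (amin σ) := by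
      intro σ
      have h1 : ((X ∪ Y).inf' hZ fun w => ((Equiv.swap u v).trans σ) w)
          = (X ∪ Y).inf' hZ fun w => σ w := hinf σ
      simp only [hamin, h1, Equiv.symm_trans_apply, Equiv.symm_symm]
      rfl
    apply Finset.card_bij' (fun σ _ => (Equiv.swap u v).trans σ)
      (fun σ _ => (Equiv.swap u v).trans σ)
    · intro σ hσ
      simp only [Finset.mem_filter, Finset.mem_univ, true_and] at hσ ⊢
      rw [haswap, hσ, Equiv.swap_apply_left]
    · intro σ hσ
      simp only [Finset.mem_filter, Finset.mem_univ, true_and] at hσ ⊢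
      rw [haswap, hσ, Equiv.swap_apply_right]
    · intro σ _; ext x; simp
    · intro σ _; ext x; simp
  -- positivity of the fiber size
  obtain ⟨u₀, hu₀⟩ := id hZ
  have hnU : Nonempty U := ⟨u₀⟩
  have hnpos : 0 < n := Fintype.card_pos
  set c := (Finset.univ.filter (fun σ : U ≃ Fin n => amin σ = u₀)).card with hc
  have hcpos : 0 < c := by
    rw [hc, Finset.card_pos]
    set e : U ≃ Fin n := Fintype.equivFin U with he
    refine ⟨e.trans (Equiv.swap (e u₀) ⟨0, hnpos⟩), ?_⟩
    simp only [Finset.mem_filter, Finset.mem_univ, true_and]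
    set σ : U ≃ Fin n := e.trans (Equiv.swap (e u₀) ⟨0, hnpos⟩) with hσ
    have h0 : σ u₀ = ⟨0, hnpos⟩ := by simp [hσ]
    have hinf0 : ((X ∪ Y).inf' hZ fun w => σ w) = σ u₀ := by
      apply le_antisymm (Finset.inf'_le _ hu₀)
      rw [h0]
      obtain ⟨w, hw, hwe⟩ := (X ∪ Y).exists_mem_eq_inf' hZ (fun w => σ w)
      rw [hwe]
      exact Fin.mk_le_of_le_val (Nat.zero_le _)
    have : amin σ = σ.symm (σ u₀) := by simp only [hamin]; rw [hinf0]
    rw [this, Equiv.symm_apply_apply]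
  -- counting
  have hcount1 : (Finset.univ.filter (fun σ : U ≃ Fin n =>
        X.inf' hX (fun u => σ u) = Y.inf' hY (fun u => σ u))).card
      = (X ∩ Y).card * c := by
    rw [Finset.card_eq_sum_card_fiberwise
      (f := amin) (t := X ∩ Y)
      (fun σ hσ => (hiff σ).1 (Finset.mem_filter.1 hσ).2)]
    rw [Finset.sum_congr rfl (fun u hu => ?_), Finset.sum_const, smul_eq_mul]
    have h1 : (Finset.univ.filter (fun σ : U ≃ Fin n =>
          X.inf' hX (fun v => σ v) = Y.inf' hY (fun v => σ v))).filter
          (fun σ => amin σ = u)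
        = Finset.univ.filter (fun σ : U ≃ Fin n => amin σ = u) := by
      ext σ
      simp only [Finset.mem_filter, Finset.mem_univ, true_and]
      constructor
      · rintro ⟨-, h⟩; exact h
      · intro h; exact ⟨(hiff σ).2 (h ▸ hu), h⟩
    rw [h1]
    exact hF u (Finset.mem_union.2 (Or.inl (Finset.mem_inter.1 hu).1)) u₀ hu₀
  have hcount2 : (Finset.univ : Finset (U ≃ Fin n)).card = (X ∪ Y).card * c := by
    rw [Finset.card_eq_sum_card_fiberwise (f := amin) (t := X ∪ Y)
      (fun σ _ => hmem σ)]
    rw [Finset.sum_congr rfl (fun u hu => hF u hu u₀ hu₀), Finset.sum_const,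
      smul_eq_mul]
  rw [hcount1, hcount2]
  have hcne : (c : ℝ) ≠ 0 := Nat.cast_ne_zero.2 hcpos.ne'
  push_cast
  rw [mul_div_mul_right _ _ hcne]
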